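/- For any positive integers m, d, any complex number z and any real r > 0, the d-fold convolution of the uniform distribution on the m-th roots of unity assigns mass at most r + 1/m to the closed ball of center z and radius r. -/

import Mathlib

open MeasureTheory

/-- The uniform probability measure on the `m`-th roots of unity in `ℂ`. -/
noncomputable def unifRoots (m : ℕ) : Measure ℂ :=
  (m : ENNReal)⁻¹ • ∑ k ∈ Finset.range m,
    Measure.dirac (Complex.exp (2 * Real.pi * Complex.I * k / m))

/-- The `d`-fold convolution of a measure `μ` on `ℂ`: the law of the sum of `d`
independent random variables with law `μ`. -/
noncomputable def convPow (μ : Measure ℂ) (d : ℕ) : Measure ℂ :=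
  (Measure.pi fun _ : Fin d => μ).map (fun x => ∑ i, x i)

open Real Complex Finset

lemma chord (θ : ℝ) : ‖Complex.exp (θ * Complex.I) - 1‖ = 2 * |Real.sin (θ / 2)| := by
  have h1 : Complex.exp (θ * Complex.I) - 1 =
      Complex.ofReal (Real.cos θ - 1) + Complex.ofReal (Real.sin θ) * Complex.I := by
    rw [Complex.exp_mul_I]; push_cast; ring
  have h2 : ‖Complex.exp (θ * Complex.I) - 1‖ ^ 2 = (2 * |Real.sin (θ / 2)|)^2 := by
    rw [h1, Complex.sq_norm, Complex.normSq_add_mul_I]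
    have hs := Real.sin_sq_eq_half_sub (θ/2)
    have hc := Real.sin_sq_add_cos_sq θ
    have : |Real.sin (θ/2)| ^ 2 = Real.sin (θ/2) ^ 2 := sq_abs _
    rw [show 2 * (θ/2) = θ by ring] at hs; nlinarith
  have ha : (0:ℝ) ≤ ‖Complex.exp (θ * Complex.I) - 1‖ := norm_nonneg _
  have hb : (0:ℝ) ≤ 2 * |Real.sin (θ / 2)| := by positivity
  nlinarith

lemma card_roots_ball (m : ℕ) (hm : 0 < m) (c : ℂ) (r : ℝ) (hr : 0 < r)
    (e : ℕ → ℂ) (he : ∀ k : ℕ, e k = Complex.exp (((2 * Real.pi * k / m : ℝ) : ℂ) * Complex.I))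
    (S : Finset ℕ) (hSsub : S ⊆ Finset.range m)
    (hSball : ∀ k ∈ S, e k ∈ Metric.closedBall c r) :
    (S.card : ℝ) ≤ (m : ℝ) * r + 1 := by
  classical
  haveI : NeZero m := ⟨hm.ne'⟩
  have hm' : (m : ℝ) ≠ 0 := Nat.cast_ne_zero.2 hm.ne'
  rcases S.eq_empty_or_nonempty with h | ⟨a, ha⟩
  · rw [h]; simp only [Finset.card_empty, Nat.cast_zero]; positivity
  have haS := ha
  set f : ℕ → ℤ := fun k => (((k : ZMod m) - (a : ZMod m)).valMinAbs) with hf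
  -- every element of S maps into a small interval
  have hbound : ∀ k ∈ S, (|f k| : ℝ) ≤ (m : ℝ) * r / 2 := by
    intro k hk
    -- chord bound
    have hdist : dist (e k) (e a) ≤ 2 * r := by
      have h1 : e k ∈ Metric.closedBall c r := hSball k hk
      have h2 : e a ∈ Metric.closedBall c r := hSball a ha
      calc dist (e k) (e a) ≤ dist (e k) c + dist c (e a) := dist_triangle _ _ _
        _ ≤ r + r := add_le_add (Metric.mem_closedBall.1 h1)
            (by rw [dist_comm]; exact Metric.mem_closedBall.1 h2)
        _ = 2 * r := by ring
    -- e k = e a * exp(θ I) with θ = 2π f k / m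
    obtain ⟨t, ht⟩ : (m : ℤ) ∣ ((k : ℤ) - (a : ℤ) - f k) := by
      have : (((k : ℤ) - (a : ℤ) - f k : ℤ) : ZMod m) = 0 := by
        push_cast [hf, ZMod.coe_valMinAbs]
        ring
      exact (ZMod.intCast_zmod_eq_zero_iff_dvd _ _).1 this
    have hkc : ((k : ℕ) : ℂ) = ((a : ℕ) : ℂ) + ((f k : ℤ) : ℂ) + ((m : ℕ) : ℂ) * ((t : ℤ) : ℂ) := by
      have h0 : (k : ℤ) = a + f k + m * t := by linarith [ht]
      exact_mod_cast congrArg (fun x : ℤ => (x : ℂ)) h0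
    have hmc : ((m : ℕ) : ℂ) ≠ 0 := Nat.cast_ne_zero.2 hm.ne'
    have hsplit : e k = e a * Complex.exp (((2 * Real.pi * (f k) / m : ℝ) : ℂ) * Complex.I) := by
      have h1 : ((2 * Real.pi * k / m : ℝ) : ℂ) * Complex.I
          = ((2 * Real.pi * a / m : ℝ) : ℂ) * Complex.I
            + ((2 * Real.pi * (f k) / m : ℝ) : ℂ) * Complex.I
            + (t : ℂ) * (2 * (Real.pi : ℂ) * Complex.I) := by
        push_cast
        rw [hkc]
        field_simp
      rw [he k, he a, h1, Complex.exp_add, Complex.exp_add,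
        Complex.exp_int_mul_two_pi_mul_I, mul_one]
    have habs : ‖e a‖ = 1 := by
      rw [he a]; exact Complex.norm_exp_ofReal_mul_I _
    have hchord : 2 * |Real.sin (Real.pi * (f k) / m)| ≤ 2 * r := by
      have : dist (e k) (e a) = ‖Complex.exp (((2 * Real.pi * (f k) / m : ℝ) : ℂ) * Complex.I) - 1‖ := by
        rw [Complex.dist_eq, hsplit, show e a * Complex.exp (((2 * Real.pi * (f k) / m : ℝ) : ℂ) * Complex.I) - e a
            = e a * (Complex.exp (((2 * Real.pi * (f k) / m : ℝ) : ℂ) * Complex.I) - 1) by ring,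
          norm_mul, habs, one_mul]
      rw [this, chord] at hdist
      rw [show Real.pi * (f k) / m = (2 * Real.pi * (f k) / m) / 2 by ring]
      exact hdist
    have hsin : |Real.sin (Real.pi * (f k) / m)| ≤ r := by linarith
    -- |f k| ≤ m/2
    have hval : (|f k| : ℝ) ≤ (m : ℝ) / 2 := by
      have h1 : (f k).natAbs ≤ m / 2 := ZMod.natAbs_valMinAbs_le _
      have h3 : (((f k).natAbs : ℕ) : ℝ) ≤ ((m / 2 : ℕ) : ℝ) := Nat.cast_le.2 h1
      have h2 : ((m / 2 : ℕ) : ℝ) ≤ (m : ℝ) / 2 := by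
        exact_mod_cast Nat.cast_div_le (α := ℝ) (m := m) (n := 2)
      have h4 : |(f k : ℝ)| = (((f k).natAbs : ℕ) : ℝ) := by
        rw [Nat.cast_natAbs, Int.cast_abs]
      rw [show (|f k| : ℝ) = |(f k : ℝ)| by push_cast; ring, h4]
      linarith
    -- sin lower bound
    have hx0 : (0:ℝ) ≤ Real.pi * |(f k : ℝ)| / m := by positivity
    have hx1 : Real.pi * |(f k : ℝ)| / m ≤ Real.pi / 2 := by
      rw [div_le_div_iff₀ (by positivity) (by norm_num : (0:ℝ) < 2)]
      push_cast at hval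
      nlinarith [Real.pi_pos]
    have hsin2 : Real.sin (Real.pi * |(f k : ℝ)| / m) ≤ r := by
      rcases abs_cases ((f k : ℝ)) with ⟨h, _⟩ | ⟨h, _⟩
      · rw [h]; calc Real.sin (Real.pi * (f k) / m) ≤ |Real.sin (Real.pi * (f k) / m)| := le_abs_self _
          _ ≤ r := hsin
      · rw [h, show Real.pi * (-(f k : ℝ)) / m = -(Real.pi * (f k) / m) by ring, Real.sin_neg]
        calc -Real.sin (Real.pi * (f k) / m) ≤ |Real.sin (Real.pi * (f k) / m)| := neg_le_abs _
          _ ≤ r := hsin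
    have hlow := Real.mul_le_sin hx0 hx1
    have : 2 / Real.pi * (Real.pi * |(f k : ℝ)| / m) ≤ r := le_trans hlow hsin2
    have hpi := Real.pi_pos
    have h2 : 2 * |(f k : ℝ)| / m ≤ r := by
      rw [show 2 / Real.pi * (Real.pi * |(f k : ℝ)| / m) = 2 * |(f k : ℝ)| / m by field_simp] at this
      exact this
    have : (|f k| : ℝ) = |(f k : ℝ)| := by push_cast; ring
    rw [this]
    rw [div_le_iff₀ (by positivity : (0:ℝ) < (m:ℝ))] at h2
    linarith
  -- injectivity
  have hinj : Set.InjOn f S := by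
    intro k hk k' hk' hkk
    have h1 : (k : ZMod m) - (a : ZMod m) = (k' : ZMod m) - (a : ZMod m) := by
      have := congrArg (fun z : ℤ => (z : ZMod m)) hkk
      simpa [hf, ZMod.coe_valMinAbs] using this
    have h2 : (k : ZMod m) = (k' : ZMod m) := by
      have := sub_left_injective.eq_iff.1 h1
      exact this
    have hk1 : k < m := Finset.mem_range.1 (hSsub hk)
    have hk2 : k' < m := Finset.mem_range.1 (hSsub hk')
    have := congrArg ZMod.val h2
    rwa [ZMod.val_cast_of_lt hk1, ZMod.val_cast_of_lt hk2] at this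
  -- cardinality via interval
  set J : ℤ := ⌊(m : ℝ) * r / 2⌋ with hJ
  have hJ0 : 0 ≤ J := Int.floor_nonneg.2 (by positivity)
  have hmaps : ∀ k ∈ S, f k ∈ Finset.Icc (-J) J := by
    intro k hk
    have h := hbound k hk
    rw [Finset.mem_Icc]
    constructor
    · rw [neg_le]
      refine Int.le_floor.2 ?_
      push_cast
      calc (-(f k) : ℝ) ≤ |(f k : ℝ)| := neg_le_abs _
        _ = (|f k| : ℝ) := by push_cast; ring
        _ ≤ _ := h
    · refine Int.le_floor.2 ?_
      push_cast
      calc ((f k) : ℝ) ≤ |(f k : ℝ)| := le_abs_self _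
        _ = (|f k| : ℝ) := by push_cast; ring
        _ ≤ _ := h
  have hcard : S.card ≤ (Finset.Icc (-J) J).card :=
    Finset.card_le_card_of_injOn f hmaps hinj
  have hIcc : ((Finset.Icc (-J) J).card : ℝ) = 2 * (J : ℝ) + 1 := by
    have h5 : ((2 * J + 1).toNat : ℤ) = 2 * J + 1 := Int.toNat_of_nonneg (by linarith)
    rw [Int.card_Icc, show J + 1 - (-J) = 2 * J + 1 by ring]
    exact_mod_cast congrArg (fun z : ℤ => (z : ℝ)) h5
  have hfl : (J : ℝ) ≤ (m : ℝ) * r / 2 := Int.floor_le _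
  calc (S.card : ℝ) ≤ ((Finset.Icc (-J) J).card : ℝ) := by exact_mod_cast hcard
    _ = 2 * (J : ℝ) + 1 := hIcc
    _ ≤ (m : ℝ) * r + 1 := by linarith

lemma unifRoots_ball_le (m : ℕ) (hm : 0 < m) (c : ℂ) (r : ℝ) (hr : 0 < r) :
    unifRoots m (Metric.closedBall c r) ≤ ENNReal.ofReal (r + 1 / m) := by
  classical
  have hm' : (m : ℝ) ≠ 0 := Nat.cast_ne_zero.2 hm.ne'
  set e : ℕ → ℂ := fun k : ℕ => Complex.exp (2 * Real.pi * Complex.I * k / m) with he_def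
  have he : ∀ k : ℕ, e k = Complex.exp (((2 * Real.pi * k / m : ℝ) : ℂ) * Complex.I) := by
    intro k
    have harg : 2 * (Real.pi : ℂ) * Complex.I * (k : ℂ) / (m : ℂ)
        = ((2 * Real.pi * k / m : ℝ) : ℂ) * Complex.I := by push_cast; ring
    simp only [he_def]
    exact congrArg Complex.exp harg
  set S : Finset ℕ := (Finset.range m).filter (fun k : ℕ => e k ∈ Metric.closedBall c r) with hS
  have hkey : (S.card : ℝ) ≤ (m : ℝ) * r + 1 :=
    card_roots_ball m hm c r hr e he S (Finset.filter_subset _ _)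
      (fun k hk => (Finset.mem_filter.1 hk).2)
  have happ : unifRoots m (Metric.closedBall c r) = (m : ENNReal)⁻¹ * S.card := by
    rw [unifRoots, Measure.smul_apply, smul_eq_mul]
    congr 1
    rw [Measure.finset_sum_apply]
    simp only [Measure.dirac_apply' _ measurableSet_closedBall,
      Set.indicator_apply, Pi.one_apply]
    rw [Finset.sum_boole]
  rw [happ]
  have h1 : (S.card : ENNReal) ≤ ENNReal.ofReal ((m : ℝ) * r + 1) := by
    rw [← ENNReal.ofReal_natCast]
    exact ENNReal.ofReal_le_ofReal hkey
  calc (m : ENNReal)⁻¹ * S.card ≤ (m : ENNReal)⁻¹ * ENNReal.ofReal ((m : ℝ) * r + 1) :=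
      mul_le_mul_right h1 _
    _ = ENNReal.ofReal (r + 1 / m) := by
      rw [← ENNReal.ofReal_natCast m, ← ENNReal.ofReal_inv_of_pos (by exact_mod_cast hm),
        ← ENNReal.ofReal_mul (by positivity)]
      congr 1
      field_simp

lemma unifRoots_univ (m : ℕ) (hm : 0 < m) : unifRoots m Set.univ = 1 := by
  rw [unifRoots, Measure.smul_apply, smul_eq_mul, Measure.finset_sum_apply]
  simp only [Measure.dirac_apply' _ MeasurableSet.univ, Set.indicator_univ, Pi.one_apply,
    Finset.sum_const, Finset.card_range, nsmul_eq_mul, mul_one]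
  exact ENNReal.inv_mul_cancel (by exact_mod_cast hm.ne' : (m : ENNReal) ≠ 0)
    (ENNReal.natCast_ne_top m)

theorem smallBallLinear (m d : ℕ) (hm : 0 < m) (hd : 0 < d) (z : ℂ) (r : ℝ) (hr : 0 < r) :
    convPow (unifRoots m) d (Metric.closedBall z r) ≤ ENNReal.ofReal (r + 1 / m) := by
  haveI : IsProbabilityMeasure (unifRoots m) := ⟨unifRoots_univ m hm⟩
  have hsum : ∀ n : ℕ, Measurable (fun x : Fin n → ℂ => ∑ i, x i) :=
    fun n => Finset.measurable_sum _ (fun i _ => measurable_pi_apply i)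
  have hd1 : 1 ≤ d := hd
  clear hd
  induction d, hd1 using Nat.le_induction generalizing z with
  | base =>
    have h1 : convPow (unifRoots m) 1 = unifRoots m := by
      rw [convPow]
      have h2 : (fun x : Fin 1 → ℂ => ∑ i, x i)
          = (MeasurableEquiv.funUnique (Fin 1) ℂ) := by
        funext x
        simp [MeasurableEquiv.funUnique, Equiv.funUnique]
      rw [h2]; exact (measurePreserving_funUnique (unifRoots m) (Fin 1)).map_eq
    rw [h1]
    exact unifRoots_ball_le m hm z r hr
  | succ d hd1 ih =>
    set μ := unifRoots m with hμ
    set B := Metric.closedBall z r with hB'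
    have hB : MeasurableSet B := measurableSet_closedBall
    have hmp := measurePreserving_piFinSuccAbove (fun _ : Fin (d + 1) => μ) 0
    have hmap : Measure.pi (fun _ : Fin (d + 1) => μ)
        = ((μ.prod (Measure.pi fun _ : Fin d => μ)).map
            (MeasurableEquiv.piFinSuccAbove (fun _ : Fin (d + 1) => ℂ) 0).symm) :=
      ((hmp.symm _).map_eq).symm
    have hcomp : ((fun x : Fin (d + 1) → ℂ => ∑ i, x i)
        ∘ (MeasurableEquiv.piFinSuccAbove (fun _ : Fin (d + 1) => ℂ) 0).symm)
        = fun p : ℂ × (Fin d → ℂ) => p.1 + ∑ i, p.2 i := by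
      funext p
      have h3 : (MeasurableEquiv.piFinSuccAbove (fun _ : Fin (d + 1) => ℂ) 0).symm p
          = Fin.cons p.1 p.2 := by
        simp [MeasurableEquiv.piFinSuccAbove, Fin.insertNthEquiv, Fin.insertNth_zero']
      simp only [Function.comp_apply, h3, Fin.sum_cons]
    have hmeas2 : Measurable (fun p : ℂ × (Fin d → ℂ) => p.1 + ∑ i, p.2 i) :=
      measurable_fst.add ((hsum d).comp measurable_snd)
    rw [convPow, hmap, Measure.map_map (hsum (d + 1)) (MeasurableEquiv.measurable _), hcomp,
      Measure.map_apply hmeas2 hB, Measure.prod_apply (hmeas2 hB)]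
    have hslice : ∀ a : ℂ,
        (Prod.mk a ⁻¹' ((fun p : ℂ × (Fin d → ℂ) => p.1 + ∑ i, p.2 i) ⁻¹' B))
        = (fun y : Fin d → ℂ => ∑ i, y i) ⁻¹' Metric.closedBall (z - a) r := by
      intro a
      ext y
      have h4 : a + (∑ i, y i) - z = (∑ i, y i) - (z - a) := by ring
      simp only [Set.mem_preimage, hB', Metric.mem_closedBall, Complex.dist_eq, h4]
    have hle : ∀ a : ℂ, (Measure.pi fun _ : Fin d => μ)
        (Prod.mk a ⁻¹' ((fun p : ℂ × (Fin d → ℂ) => p.1 + ∑ i, p.2 i) ⁻¹' B))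
        ≤ ENNReal.ofReal (r + 1 / m) := by
      intro a
      rw [hslice a, ← Measure.map_apply (hsum d) measurableSet_closedBall]
      exact ih (z - a)
    calc ∫⁻ a, (Measure.pi fun _ : Fin d => μ)
          (Prod.mk a ⁻¹' ((fun p : ℂ × (Fin d → ℂ) => p.1 + ∑ i, p.2 i) ⁻¹' B)) ∂μ
        ≤ ∫⁻ _a, ENNReal.ofReal (r + 1 / m) ∂μ := lintegral_mono hle
      _ = ENNReal.ofReal (r + 1 / m) := by rw [lintegral_const, measure_univ, mul_one]
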